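/- Let c ∈ ℤ^l, m = max(c_1, ..., c_l), K = {k : c_k = m}, and n ≥ 1. Define the multipartition λ with λ^(k) = (n) (a single row of length n) for k ∈ K and λ^(k) = ∅ otherwise. Then λ is the unique l-multipartition whose multiset of (0|c)-residues equals {m^{|K|}, (m+1)^{|K|}, ..., (m+n-1)^{|K|}}, where the (0|c)-residue of a node (a,b,k) is b - a + c_k ∈ ℤ. -/

import Mathlib

/-- A partition: a weakly decreasing sequence of non-negative integers,
with finitely many nonzero terms (indices are 0-based; `parts i` is `λ_{i+1}`). -/
structure Partition' where
  parts : ℕ → ℕ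
  antitone : ∀ i j : ℕ, i ≤ j → parts j ≤ parts i
  finite_support : ∃ N : ℕ, ∀ i : ℕ, N ≤ i → parts i = 0

/-- The beta-set `B(λ) = {λ_a - a : a ≥ 1}` of a partition. -/
def betaSet (lam : Partition') : Set ℤ :=
  Set.range fun i : ℕ => (lam.parts i : ℤ) - (i + 1)

/-- The shifted set `S + c`. -/
def shiftSet (S : Set ℤ) (c : ℤ) : Set ℤ := (fun x => x + c) '' S

/-- The number of nodes of an `l`-multipartition `μ` of `(0|c)`-residue `x`:
nodes are triples (row `t.1`, 0-based; column `t.2.1`, 1-based; component `t.2.2`),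
and the residue of node `(a, b, k)` (with `a` 1-based) is `b - a + c_k`. -/
noncomputable def mcount (l : ℕ) (c : Fin l → ℤ) (mu : Fin l → Partition') (x : ℤ) : ℕ :=
  {t : ℕ × ℕ × Fin l | 1 ≤ t.2.1 ∧ t.2.1 ≤ (mu t.2.2).parts t.1 ∧
    (t.2.1 : ℤ) - ((t.1 : ℤ) + 1) + c t.2.2 = x}.ncard

lemma Partition'.ext' {p q : Partition'} (h : p.parts = q.parts) : p = q := by
  cases p; cases q; simp_all

lemma mcount_set_finite (l : ℕ) (c : Fin l → ℤ) (mu : Fin l → Partition') (x : ℤ) :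
    {t : ℕ × ℕ × Fin l | 1 ≤ t.2.1 ∧ t.2.1 ≤ (mu t.2.2).parts t.1 ∧
      (t.2.1 : ℤ) - ((t.1 : ℤ) + 1) + c t.2.2 = x}.Finite := by
  classical
  set F : Fin l → ℕ := fun k => Classical.choose (mu k).finite_support with hF
  have hFs : ∀ k i, F k ≤ i → (mu k).parts i = 0 := fun k =>
    Classical.choose_spec (mu k).finite_support
  set N := Finset.univ.sup F with hN
  set M := Finset.univ.sup (fun k => (mu k).parts 0) with hM
  apply Set.Finite.subset
    ((Set.finite_Iio N).prod ((Set.finite_Iio (M + 1)).prod Set.finite_univ))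
  rintro ⟨a, b, k⟩ ⟨h1, h2, _⟩
  dsimp only at h1 h2
  refine ⟨?_, ?_, trivial⟩
  · by_contra hc
    simp only [Set.mem_Iio, not_lt] at hc
    have hFk : F k ≤ a := le_trans (Finset.le_sup (Finset.mem_univ k)) hc
    have := hFs k a hFk
    omega
  · have h0 : b ≤ (mu k).parts 0 := le_trans h2 ((mu k).antitone 0 a (Nat.zero_le a))
    have hM' : (mu k).parts 0 ≤ M := Finset.le_sup (f := fun k => (mu k).parts 0) (Finset.mem_univ k)
    simp only [Set.mem_Iio]
    omega

theorem stmt_18 (l : ℕ) (c : Fin l → ℤ) (m : ℤ) (hm : IsGreatest (Set.range c) m)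
    (n : ℕ) (hn : 1 ≤ n) (lam : Fin l → Partition')
    (hlamK : ∀ k : Fin l, c k = m → (lam k).parts = fun r => if r = 0 then n else 0)
    (hlamK' : ∀ k : Fin l, c k ≠ m → (lam k).parts = fun _ => 0) :
    ∀ mu : Fin l → Partition',
      (∀ x : ℤ, mcount l c mu x =
          if m ≤ x ∧ x < m + n then {k : Fin l | c k = m}.ncard else 0) ↔ mu = lam := by
  classical
  have hcle : ∀ k, c k ≤ m := fun k => hm.2 ⟨k, rfl⟩
  intro mu
  constructor
  · -- forward: uniqueness
    intro h
    have hpos : ∀ (x : ℤ) (t : ℕ × ℕ × Fin l), 1 ≤ t.2.1 →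
        t.2.1 ≤ (mu t.2.2).parts t.1 →
        (t.2.1 : ℤ) - ((t.1 : ℤ) + 1) + c t.2.2 = x → 0 < mcount l c mu x := by
      intro x t h1 h2 h3
      simp only [mcount]
      exact (Set.ncard_pos (mcount_set_finite l c mu x)).mpr ⟨t, h1, h2, h3⟩
    have key0 : ∀ (k : Fin l) (i : ℕ), (c k : ℤ) - i < m → (mu k).parts i = 0 := by
      intro k i hlt
      by_contra hi
      have h1 : 1 ≤ (mu k).parts i := Nat.pos_of_ne_zero hi
      have hp := hpos (c k - i) (i, 1, k) le_rfl h1 (by push_cast; ring)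
      rw [h (c k - i), if_neg (by intro hh; omega)] at hp
      exact absurd hp (lt_irrefl 0)
    have hKne : ∀ k, c k ≠ m → ∀ i, (mu k).parts i = 0 := by
      intro k hk i
      have hlt : c k < m := lt_of_le_of_ne (hcle k) hk
      have hi0 : (0 : ℤ) ≤ (i : ℤ) := Int.natCast_nonneg i
      exact key0 k i (by omega)
    have hrow : ∀ k (i : ℕ), 1 ≤ i → (mu k).parts i = 0 := by
      intro k i hi
      have hi1 : (1 : ℤ) ≤ (i : ℤ) := by exact_mod_cast hi
      have := hcle k
      exact key0 k i (by omega)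
    have hub : ∀ k, (mu k).parts 0 ≤ n := by
      intro k
      by_cases hck : c k = m
      · by_contra hc
        push_neg at hc
        have h2 : n + 1 ≤ (mu k).parts 0 := hc
        have hp := hpos (m + n) (0, n + 1, k) (Nat.le_add_left 1 n) h2
          (by rw [hck]; push_cast; ring)
        rw [h (m + n), if_neg (by intro hh; omega)] at hp
        exact absurd hp (lt_irrefl 0)
      · rw [hKne k hck 0]; omega
    have hlb : ∀ d : ℕ, d < n → ∀ k, c k = m → d + 1 ≤ (mu k).parts 0 := by
      intro d hd
      set K : Set (Fin l) := {k : Fin l | c k = m} with hK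
      set K' : Set (Fin l) := {k : Fin l | c k = m ∧ d + 1 ≤ (mu k).parts 0} with hK'
      have himg : {t : ℕ × ℕ × Fin l | 1 ≤ t.2.1 ∧ t.2.1 ≤ (mu t.2.2).parts t.1 ∧
          (t.2.1 : ℤ) - ((t.1 : ℤ) + 1) + c t.2.2 = m + d} =
          (fun k : Fin l => ((0 : ℕ), d + 1, k)) '' K' := by
        ext ⟨a, b, k⟩
        simp only [Set.mem_setOf_eq, Set.mem_image, hK', Prod.mk.injEq]
        constructor
        · rintro ⟨h1, h2, h3⟩
          have hck : c k = m := by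
            by_contra hck
            rw [hKne k hck a] at h2; omega
          have ha : a = 0 := by
            by_contra ha
            rw [hrow k a (by omega)] at h2; omega
          subst ha
          have hb : (b : ℤ) = (d : ℤ) + 1 := by rw [hck] at h3; push_cast at h3 ⊢; omega
          have hb' : b = d + 1 := by exact_mod_cast hb
          exact ⟨k, ⟨hck, hb' ▸ h2⟩, rfl, hb'.symm, rfl⟩
        · rintro ⟨k', ⟨hck, hle⟩, rfl, rfl, rfl⟩
          refine ⟨by omega, hle, ?_⟩
          rw [hck]; push_cast; ring
      have hcard := h (m + d)
      rw [if_pos ⟨by omega, by push_cast; omega⟩] at hcard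
      simp only [mcount] at hcard
      rw [himg] at hcard
      rw [Set.ncard_image_of_injective K' (fun a b hab => by
        simpa using congrArg (fun t : ℕ × ℕ × Fin l => t.2.2) hab)] at hcard
      have hsub : K' ⊆ K := fun k hk => hk.1
      have heq : K' = K :=
        Set.eq_of_subset_of_ncard_le hsub (le_of_eq hcard.symm) (Set.toFinite K)
      intro k hck
      have hk' : k ∈ K' := heq ▸ (hck : k ∈ K)
      exact hk'.2
    funext k
    apply Partition'.ext'
    by_cases hck : c k = m
    · rw [hlamK k hck]
      funext i
      rcases Nat.eq_zero_or_pos i with hi | hi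
      · subst hi
        rw [if_pos rfl]
        have h1 := hlb (n - 1) (by omega) k hck
        have h2 := hub k
        omega
      · rw [if_neg (by omega : ¬ i = 0)]
        exact hrow k i hi
    · rw [hlamK' k hck]
      funext i
      exact hKne k hck i
  · -- backward: computation for mu
    rintro rfl
    intro x
    simp only [mcount]
    by_cases hx : m ≤ x ∧ x < m + n
    · rw [if_pos hx]
      obtain ⟨hx1, hx2⟩ := hx
      set d : ℕ := (x - m).toNat with hd
      have hdz : (d : ℤ) = x - m := Int.toNat_of_nonneg (by omega)
      have himg : {t : ℕ × ℕ × Fin l | 1 ≤ t.2.1 ∧ t.2.1 ≤ (mu t.2.2).parts t.1 ∧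
          (t.2.1 : ℤ) - ((t.1 : ℤ) + 1) + c t.2.2 = x} =
          (fun k : Fin l => ((0 : ℕ), d + 1, k)) '' {k : Fin l | c k = m} := by
        ext ⟨a, b, k⟩
        simp only [Set.mem_setOf_eq, Set.mem_image, Prod.mk.injEq]
        constructor
        · rintro ⟨h1, h2, h3⟩
          have hck : c k = m := by
            by_contra hck
            simp only [hlamK' k hck] at h2; omega
          simp only [hlamK k hck] at h2
          have ha : a = 0 := by
            by_contra ha
            rw [if_neg ha] at h2; omega
          subst ha
          rw [if_pos rfl] at h2
          have hb : (b : ℤ) = (d : ℤ) + 1 := by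
            rw [hck] at h3; push_cast at h3 ⊢; omega
          have hb' : b = d + 1 := by exact_mod_cast hb
          exact ⟨k, hck, rfl, hb'.symm, rfl⟩
        · rintro ⟨k', hck, rfl, rfl, rfl⟩
          have hp : (mu k').parts 0 = n := by rw [hlamK k' hck]; rfl
          refine ⟨by omega, ?_, ?_⟩
          · rw [hp]; omega
          · rw [hck]; push_cast; omega
      rw [himg]
      exact Set.ncard_image_of_injective _ (fun a b hab => by
        simpa using congrArg (fun t : ℕ × ℕ × Fin l => t.2.2) hab)
    · rw [if_neg hx]
      have hemp : {t : ℕ × ℕ × Fin l | 1 ≤ t.2.1 ∧ t.2.1 ≤ (mu t.2.2).parts t.1 ∧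
          (t.2.1 : ℤ) - ((t.1 : ℤ) + 1) + c t.2.2 = x} = ∅ := by
        ext ⟨a, b, k⟩
        simp only [Set.mem_setOf_eq, Set.mem_empty_iff_false, iff_false, not_and]
        intro h1 h2 h3
        have hck : c k = m := by
          by_contra hck
          simp only [hlamK' k hck] at h2; omega
        simp only [hlamK k hck] at h2
        have ha : a = 0 := by
          by_contra ha
          rw [if_neg ha] at h2; omega
        subst ha
        rw [if_pos rfl] at h2
        rw [hck] at h3
        exact hx ⟨by omega, by omega⟩
      rw [hemp, Set.ncard_empty]
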